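/- Fix T > 0, τ > 0, α ≥ 0 and compact sets C₁, C₂ ⊂ ℝ^d. Then the set { f ∈ C([0,T]; ℝ^d) : there exist t₀ ∈ [τ, ∞) and a probability measure μ₀ on ℝ^d with μ₀(C₂) = 1 such that f(0) ∈ C₁ and J_{t₀,μ₀}(f) ≤ α } is totally bounded in C([0,T]; ℝ^d) with the supremum norm. -/

import Mathlib

open MeasureTheory Set

noncomputable section

abbrev Ed (d : ℕ) : Type := EuclideanSpace ℝ (Fin d)

/-- `f` is absolutely continuous on `[0,T]` with (integrable) derivative `f'`
whose norm is square integrable. -/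
def HasL2Deriv {d : ℕ} (T : ℝ) (f f' : ℝ → Ed d) : Prop :=
  IntervalIntegrable f' volume 0 T ∧
  IntervalIntegrable (fun s => ‖f' s‖ ^ 2) volume 0 T ∧
  ∀ t ∈ Icc (0:ℝ) T, f t = f 0 + ∫ s in (0:ℝ)..t, f' s

/-- The drift mismatch appearing in the rate function of the generalized
self-interacting diffusion with initial data `(t₀, μ₀)`. -/
def drift {d : ℕ} (V F : Ed d → ℝ) (t₀ : ℝ) (μ₀ : Measure (Ed d))
    (f f' : ℝ → Ed d) (t : ℝ) : Ed d :=
  f' t + gradient V (f t) + (t₀ / (t₀ + t)) • (∫ u, gradient F (f t - u) ∂μ₀)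
    + (1 / (t₀ + t)) • (∫ s in (0:ℝ)..t, gradient F (f t - f s))

open intervalIntegral
lemma grad_continuous {d : ℕ} {V : Ed d → ℝ} (hV : ContDiff ℝ 2 V) :
    Continuous (gradient V) := by
  have h1 : Continuous (fderiv ℝ V) := (hV.fderiv_right (m := 1) (by norm_num)).continuous
  exact (InnerProductSpace.toDual ℝ (Ed d)).symm.continuous.comp h1

lemma grad_norm_bound {d : ℕ} {V : Ed d → ℝ} {L : ℝ}
    (h : ∀ x y : Ed d, ‖gradient V x - gradient V y‖ ≤ L * ‖x - y‖) (x : Ed d) :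
    ‖gradient V x‖ ≤ ‖gradient V 0‖ + L * ‖x‖ := by
  have := h x 0
  have h2 : ‖gradient V x‖ - ‖gradient V 0‖ ≤ ‖gradient V x - gradient V 0‖ :=
    norm_sub_norm_le _ _
  simp only [sub_zero] at this
  linarith

/-- Arzelà–Ascoli wrapper: a family with a common modulus of continuity and common bound
is totally bounded. -/
lemma totallyBounded_modulus {d : ℕ} {X : Type*} [MetricSpace X] [CompactSpace X]
    (R : ℝ) (ω : ℝ → ℝ) (hω : Filter.Tendsto ω (nhds 0) (nhds 0)) :
    TotallyBounded {f : C(X, Ed d) | (∀ x, ‖f x‖ ≤ R) ∧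
      ∀ x y, ‖f x - f y‖ ≤ ω (dist x y)} := by
  set K := {f : C(X, Ed d) | (∀ x, ‖f x‖ ≤ R) ∧ ∀ x y, ‖f x - f y‖ ≤ ω (dist x y)}
  set P : Set (X → Ed d) := {g | (∀ x, ‖g x‖ ≤ R) ∧ ∀ x y, ‖g x - g y‖ ≤ ω (dist x y)}
  have hPclosed : IsClosed P := by
    have h1 : IsClosed {g : X → Ed d | ∀ x, ‖g x‖ ≤ R} := by
      rw [setOf_forall]
      exact isClosed_iInter fun x =>
        isClosed_le (continuous_norm.comp (continuous_apply x)) continuous_const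
    have h2 : IsClosed {g : X → Ed d | ∀ x y, ‖g x - g y‖ ≤ ω (dist x y)} := by
      rw [setOf_forall]
      refine isClosed_iInter fun x => ?_
      rw [setOf_forall]
      exact isClosed_iInter fun y =>
        isClosed_le (continuous_norm.comp ((continuous_apply x).sub (continuous_apply y)))
          continuous_const
    exact h1.inter h2
  have hPcompact : IsCompact P := by
    refine IsCompact.of_isClosed_subset (isCompact_univ_pi fun _ : X =>
      isCompact_closedBall (0 : Ed d) R) hPclosed ?_
    intro g hg
    intro x _
    simpa [Metric.mem_closedBall, dist_eq_norm] using hg.1 x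
  -- continuity from modulus
  have hcont : ∀ g : X → Ed d, (∀ x y : X, ‖g x - g y‖ ≤ ω (dist x y)) → Continuous g := by
    intro g hg
    rw [Metric.continuous_iff]
    intro x ε hε
    obtain ⟨δ, hδpos, hδ⟩ := Metric.tendsto_nhds_nhds.1 hω ε hε
    refine ⟨δ, hδpos, fun y hy => ?_⟩
    have h1 : ‖g y - g x‖ ≤ ω (dist y x) := hg y x
    have h2 : |ω (dist y x)| < ε := by
      have := hδ (x := dist y x) (by simpa [Real.dist_eq, abs_of_nonneg dist_nonneg] using hy)
      simpa [Real.dist_eq] using this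
    rw [dist_eq_norm]
    exact lt_of_le_of_lt (h1.trans (le_abs_self _)) h2
  have himg : ContinuousMap.toFun '' K = P := by
    ext g
    constructor
    · rintro ⟨f, hf, rfl⟩
      exact hf
    · intro hg
      exact ⟨⟨g, hcont g hg.2⟩, hg, rfl⟩
  have hequi : Equicontinuous ((↑) : K → X → Ed d) := by
    apply Metric.equicontinuous_of_continuity_modulus (fun δ => |ω δ|)
    · have : Filter.Tendsto (fun δ => |ω δ|) (nhds 0) (nhds |(0:ℝ)|) := hω.abs
      simpa using this
    · intro x y f
      rw [dist_eq_norm]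
      exact (f.2.2 x y).trans (le_abs_self _)
  have hKcompact : IsCompact K := by
    apply ArzelaAscoli.isCompact_of_equicontinuous
    · rw [himg]; exact hPcompact
    · exact hequi
  exact hKcompact.totallyBounded

def eps0 (cV cF LV LF r₁ r₂ T α : ℝ) : ℝ :=
  α + T/4 + ((cV + 2*cF + LF*r₂) + (LV+3*LF)*r₁)*T

def PsiC (cV cF LV LF r₁ r₂ T α : ℝ) : ℝ :=
  eps0 cV cF LV LF r₁ r₂ T α +
    (LV+3*LF) * gronwallBound 0 (LV+3*LF) (eps0 cV cF LV LF r₁ r₂ T α) T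

set_option maxHeartbeats 1000000 in
lemma key_estimates {d : ℕ}
    (V F : Ed d → ℝ) (hV : ContDiff ℝ 2 V) (hF : ContDiff ℝ 2 F)
    (LV LF : ℝ) (hLV : 0 ≤ LV) (hLF : 0 ≤ LF)
    (hVlip : ∀ x y : Ed d, ‖gradient V x - gradient V y‖ ≤ LV * ‖x - y‖)
    (hFlip : ∀ x y : Ed d, ‖gradient F x - gradient F y‖ ≤ LF * ‖x - y‖)
    (T τ α : ℝ) (hT : 0 < T) (hτ : 0 < τ) (hα : 0 ≤ α)
    (r₁ r₂ : ℝ) (hr₁ : 0 ≤ r₁) (hr₂ : 0 ≤ r₂)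
    (t₀ : ℝ) (ht₀ : τ ≤ t₀)
    (μ₀ : Measure (Ed d)) (hprob : IsProbabilityMeasure μ₀)
    (C₂ : Set (Ed d)) (hC₂m : MeasurableSet C₂) (hC₂b : C₂ ⊆ Metric.closedBall 0 r₂)
    (hμC₂ : μ₀ C₂ = 1)
    (Fc f' : ℝ → Ed d) (hFcont : Continuous Fc)
    (Sf : ℝ) (hSf : ∀ t, ‖Fc t‖ ≤ Sf)
    (h0 : ‖Fc 0‖ ≤ r₁)
    (hf'I : IntervalIntegrable f' volume 0 T)
    (hf'2 : IntervalIntegrable (fun s => ‖f' s‖ ^ 2) volume 0 T)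
    (hFTC : ∀ t ∈ Icc (0:ℝ) T, Fc t = Fc 0 + ∫ s in (0:ℝ)..t, f' s)
    (hJ : (∫ t in (0:ℝ)..T, ‖drift V F t₀ μ₀ Fc f' t‖ ^ 2) ≤ α) :
    (∀ t ∈ Icc (0:ℝ) T, ‖Fc t‖ ≤ r₁ + PsiC (‖gradient V 0‖) (‖gradient F 0‖) LV LF r₁ r₂ T α) ∧
    (∀ s t : ℝ, 0 ≤ s → s ≤ t → t ≤ T → ‖Fc t - Fc s‖ ≤
      Real.sqrt (t-s) * (α+1) +
      ((‖gradient V 0‖ + 2*‖gradient F 0‖ + LF*r₂) +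
        (LV+3*LF)*(r₁ + PsiC (‖gradient V 0‖) (‖gradient F 0‖) LV LF r₁ r₂ T α)) * (t-s)) := by
  set cV := ‖gradient V 0‖ with hcV
  set cF := ‖gradient F 0‖ with hcF
  set K0 := LV + 3*LF with hK0
  set c0 := cV + 2*cF + LF*r₂ with hc0
  set ε₀ := eps0 cV cF LV LF r₁ r₂ T α with hε₀
  set Ψ := PsiC cV cF LV LF r₁ r₂ T α with hΨ
  have hK0nn : 0 ≤ K0 := by positivity
  have hcVnn : 0 ≤ cV := norm_nonneg _
  have hcFnn : 0 ≤ cF := norm_nonneg _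
  have hc0nn : 0 ≤ c0 := by positivity
  set ψ : ℝ → ℝ := fun t => ∫ s in (0:ℝ)..t, ‖f' s‖ with hψdef
  set I₁ : ℝ → Ed d := fun t => ∫ u, gradient F (Fc t - u) ∂μ₀ with hI₁def
  set I₂ : ℝ → Ed d := fun t => ∫ s in (0:ℝ)..t, gradient F (Fc t - Fc s) with hI₂def
  set G : ℝ → Ed d := fun t =>
    gradient V (Fc t) + (t₀/(t₀+t)) • I₁ t + (1/(t₀+t)) • I₂ t with hGdef
  set D : ℝ → Ed d := fun t => drift V F t₀ μ₀ Fc f' t with hDdef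
  have hD : ∀ t, D t = f' t + G t := by
    intro t; simp only [hDdef, drift, hGdef, hI₁def, hI₂def]; abel
  -- t₀ + t positivity
  have ht₀t : ∀ t : ℝ, 0 ≤ t → 0 < t₀ + t := fun t ht => by linarith
  -- a.e. bound on μ₀
  have hae : ∀ᵐ u ∂μ₀, ‖u‖ ≤ r₂ := by
    have hc : μ₀ C₂ᶜ = 0 := by
      rw [measure_compl hC₂m (measure_ne_top μ₀ C₂), hμC₂]
      simp
    rw [MeasureTheory.ae_iff]
    refine measure_mono_null (fun u hu => ?_) hc
    simp only [mem_setOf_eq, not_le] at hu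
    intro huC
    have := hC₂b huC
    rw [Metric.mem_closedBall, dist_zero_right] at this
    exact absurd this (not_le.2 hu)
  -- norm of f' integrable
  have hnf'I : IntervalIntegrable (fun s => ‖f' s‖) volume 0 T := hf'I.norm
  -- ψ : basic facts
  have hsubII : ∀ s t : ℝ, 0 ≤ s → s ≤ t → t ≤ T →
      IntervalIntegrable (fun s => ‖f' s‖) volume s t := by
    intro s t hs hst ht
    exact hnf'I.mono_set (by
      rw [uIcc_of_le hT.le]
      exact uIcc_subset_Icc ⟨hs, by linarith⟩ ⟨by linarith, ht⟩)
  have hψmono : ∀ s t : ℝ, 0 ≤ s → s ≤ t → t ≤ T → ψ s ≤ ψ t := by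
    intro s t hs hst htT
    have hadd := integral_add_adjacent_intervals (a := (0:ℝ)) (b := s) (c := t)
      (hsubII 0 s le_rfl hs (by linarith)) (hsubII s t hs hst htT)
    have hnn : 0 ≤ ∫ x in s..t, ‖f' x‖ :=
      integral_nonneg hst (fun x _ => norm_nonneg _)
    simp only [hψdef]
    linarith [hadd.symm.le, hadd.le]
  have hψnn : ∀ t ∈ Icc (0:ℝ) T, 0 ≤ ψ t := by
    intro t ht
    have := hψmono 0 t le_rfl ht.1 ht.2
    simpa [hψdef, integral_same] using this
  have hnf'Icc : IntegrableOn (fun s => ‖f' s‖) (Icc 0 T) volume := by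
    rw [integrableOn_Icc_iff_integrableOn_Ioc]
    exact (intervalIntegrable_iff_integrableOn_Ioc_of_le hT.le).1 hnf'I
  have hψcont : ContinuousOn ψ (Icc 0 T) := by
    have := intervalIntegral.continuousOn_primitive_interval
      (a := (0:ℝ)) (b := T) (μ := volume) (f := fun s => ‖f' s‖)
      (by rwa [uIcc_of_le hT.le])
    rwa [uIcc_of_le hT.le] at this
  -- norm of Fc via FTC
  have hFψ : ∀ t ∈ Icc (0:ℝ) T, ‖Fc t‖ ≤ r₁ + ψ t := by
    intro t ht
    rw [hFTC t ht]
    calc ‖Fc 0 + ∫ s in (0:ℝ)..t, f' s‖ ≤ ‖Fc 0‖ + ‖∫ s in (0:ℝ)..t, f' s‖ := norm_add_le _ _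
    _ ≤ r₁ + ψ t := by
        gcongr
        exact (norm_integral_le_integral_norm ht.1)
  -- I₁ facts
  have hgFc : Continuous (gradient F) := grad_continuous hF
  have hgradFbd : ∀ x : Ed d, ‖gradient F x‖ ≤ cF + LF * ‖x‖ := grad_norm_bound hFlip
  have hI₁cont : Continuous I₁ := by
    apply MeasureTheory.continuous_of_dominated
      (bound := fun _ => cF + LF * (Sf + r₂))
    · intro t
      exact ((hgFc.comp (continuous_const.sub continuous_id)).aestronglyMeasurable)
    · intro t
      filter_upwards [hae] with u hu
      calc ‖gradient F (Fc t - u)‖ ≤ cF + LF * ‖Fc t - u‖ := hgradFbd _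
        _ ≤ cF + LF * (Sf + r₂) := by
            have h1 := norm_sub_le (Fc t) u
            have h2 := hSf t
            gcongr
            linarith
    · exact integrable_const _
    · filter_upwards with u
      exact hgFc.comp (hFcont.sub continuous_const)
  have hI₁bd : ∀ t : ℝ, ‖I₁ t‖ ≤ cF + LF * (‖Fc t‖ + r₂) := by
    intro t
    have hle : ‖I₁ t‖ ≤ ∫ _u, (cF + LF * (‖Fc t‖ + r₂)) ∂μ₀ := by
      apply MeasureTheory.norm_integral_le_of_norm_le (integrable_const _)
      filter_upwards [hae] with u hu
      calc ‖gradient F (Fc t - u)‖ ≤ cF + LF * ‖Fc t - u‖ := hgradFbd _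
        _ ≤ cF + LF * (‖Fc t‖ + r₂) := by
            have := norm_sub_le (Fc t) u
            gcongr
            linarith
    simpa [MeasureTheory.integral_const] using hle
  -- I₂ facts
  have hSf0 : 0 ≤ Sf := (norm_nonneg _).trans (hSf 0)
  have hI₂cont : ContinuousOn I₂ (Icc 0 T) := by
    set μr := volume.restrict (Icc (0:ℝ) T) with hμr
    set g : ℝ → ℝ → Ed d :=
      fun t s => (Ioc (0:ℝ) t).indicator (fun s' => gradient F (Fc t - Fc s')) s with hg
    have hgasm : ∀ t' : ℝ, AEStronglyMeasurable (g t') μr := fun t' =>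
      ((hgFc.comp (continuous_const.sub hFcont)).aestronglyMeasurable).indicator
        measurableSet_Ioc
    have hgbd : ∀ (t' s : ℝ), ‖g t' s‖ ≤ cF + 2*(LF*Sf) := by
      intro t' s
      simp only [hg]
      by_cases hmem : s ∈ Ioc (0:ℝ) t'
      · rw [indicator_of_mem hmem]
        calc ‖gradient F (Fc t' - Fc s)‖ ≤ cF + LF * ‖Fc t' - Fc s‖ := hgradFbd _
          _ ≤ cF + 2*(LF*Sf) := by
              have h1 := norm_sub_le (Fc t') (Fc s)
              have h2 := hSf t'
              have h3 := hSf s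
              nlinarith
      · rw [indicator_of_notMem hmem]
        have : (0:ℝ) ≤ cF + 2*(LF*Sf) := by positivity
        simpa using this
    have hJcont : Continuous (fun t => ∫ s, g t s ∂μr) := by
      rw [continuous_iff_continuousAt]
      intro t
      apply MeasureTheory.continuousAt_of_dominated (bound := fun _ => cF + 2*(LF*Sf))
      · exact Filter.Eventually.of_forall hgasm
      · exact Filter.Eventually.of_forall fun t' =>
          Filter.Eventually.of_forall fun s => hgbd t' s
      · exact integrableOn_const measure_Icc_lt_top.ne
      · have h0 : μr {t} = 0 := by
          rw [hμr, Measure.restrict_apply (measurableSet_singleton t)]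
          exact measure_mono_null inter_subset_left (measure_singleton t)
        have hne : ∀ᵐ s ∂μr, s ≠ t := by
          rw [MeasureTheory.ae_iff]
          convert h0 using 2
          ext s
          simp
        filter_upwards [hne] with s hst
        by_cases hs0 : s ≤ 0
        · have hzero : ∀ t' : ℝ, g t' s = 0 := by
            intro t'
            simp only [hg]
            exact indicator_of_notMem (fun h => absurd h.1 (not_lt.2 hs0)) _
          rw [funext hzero]
          exact continuousAt_const
        · push_neg at hs0
          rcases lt_or_gt_of_ne hst with hlt | hgt
          · have hev : (fun t' => g t' s) =ᶠ[nhds t]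
                (fun t' => gradient F (Fc t' - Fc s)) := by
              filter_upwards [Ioi_mem_nhds hlt] with t' ht'
              simp only [hg]
              exact indicator_of_mem (show s ∈ Ioc (0:ℝ) t' from ⟨hs0, le_of_lt ht'⟩) _
            exact ContinuousAt.congr
              ((hgFc.comp (hFcont.sub continuous_const)).continuousAt) hev.symm
          · have hev : (fun t' => g t' s) =ᶠ[nhds t] (fun _ => 0) := by
              filter_upwards [Iio_mem_nhds hgt] with t' ht'
              simp only [hg]
              exact indicator_of_notMem (fun h => absurd h.2 (not_le.2 ht')) _
            exact ContinuousAt.congr continuousAt_const hev.symm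
    apply ContinuousOn.congr (hJcont.continuousOn)
    intro t ht
    have hIocsub : Ioc (0:ℝ) t ⊆ Icc (0:ℝ) T :=
      Ioc_subset_Icc_self.trans (Icc_subset_Icc_right ht.2)
    simp only [hI₂def, hg]
    rw [intervalIntegral.integral_of_le ht.1]
    rw [MeasureTheory.integral_indicator measurableSet_Ioc, hμr,
      Measure.restrict_restrict measurableSet_Ioc,
      inter_eq_self_of_subset_left hIocsub]
  have hI₂bd : ∀ t ∈ Icc (0:ℝ) T,
      ‖I₂ t‖ ≤ (cF + LF * (‖Fc t‖ + (r₁ + ψ t))) * t := by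
    intro t ht
    have h := intervalIntegral.norm_integral_le_of_norm_le_const
      (C := cF + LF * (‖Fc t‖ + (r₁ + ψ t)))
      (f := fun s => gradient F (Fc t - Fc s)) (a := (0:ℝ)) (b := t) ?_
    · simpa [abs_of_nonneg ht.1] using h
    · intro s hs
      rw [uIoc_of_le ht.1] at hs
      have hsIcc : s ∈ Icc (0:ℝ) T := ⟨hs.1.le, hs.2.trans ht.2⟩
      have hψs : ψ s ≤ ψ t := hψmono s t hsIcc.1 hs.2 ht.2
      have hFs : ‖Fc s‖ ≤ r₁ + ψ s := hFψ s hsIcc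
      calc ‖gradient F (Fc t - Fc s)‖ ≤ cF + LF * ‖Fc t - Fc s‖ := hgradFbd _
        _ ≤ cF + LF * (‖Fc t‖ + (r₁ + ψ t)) := by
            have h1 := norm_sub_le (Fc t) (Fc s)
            gcongr
            linarith
  -- G facts
  have hden : ∀ t ∈ Icc (0:ℝ) T, t₀ + t ≠ 0 := fun t ht => (ht₀t t ht.1).ne'
  have hGcont : ContinuousOn G (Icc 0 T) := by
    apply ContinuousOn.add
    apply ContinuousOn.add
    · exact ((grad_continuous hV).comp hFcont).continuousOn
    · exact (continuousOn_const.div ((continuous_const.add continuous_id).continuousOn) hden).smul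
        hI₁cont.continuousOn
    · exact (continuousOn_const.div ((continuous_const.add continuous_id).continuousOn) hden).smul
        hI₂cont
  have hGbd : ∀ t ∈ Icc (0:ℝ) T, ‖G t‖ ≤ c0 + K0 * (r₁ + ψ t) := by
    intro t ht
    have hpos : 0 < t₀ + t := ht₀t t ht.1
    have hFt : ‖Fc t‖ ≤ r₁ + ψ t := hFψ t ht
    have hψt : 0 ≤ ψ t := hψnn t ht
    have h1 : ‖gradient V (Fc t)‖ ≤ cV + LV * (r₁ + ψ t) := by
      calc ‖gradient V (Fc t)‖ ≤ cV + LV * ‖Fc t‖ := grad_norm_bound hVlip _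
        _ ≤ cV + LV * (r₁ + ψ t) := by gcongr
    have h2 : ‖(t₀/(t₀+t)) • I₁ t‖ ≤ cF + LF * r₂ + LF * (r₁ + ψ t) := by
      rw [norm_smul]
      have hcoef : |t₀/(t₀+t)| ≤ 1 := by
        rw [abs_of_nonneg (div_nonneg (by linarith) hpos.le), div_le_one hpos]
        linarith [ht.1]
      calc |t₀/(t₀+t)| * ‖I₁ t‖ ≤ 1 * ‖I₁ t‖ := by
            exact mul_le_mul_of_nonneg_right hcoef (norm_nonneg _)
        _ = ‖I₁ t‖ := one_mul _
        _ ≤ cF + LF * (‖Fc t‖ + r₂) := hI₁bd t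
        _ ≤ cF + LF * r₂ + LF * (r₁ + ψ t) := by nlinarith
    have h3 : ‖(1/(t₀+t)) • I₂ t‖ ≤ cF + 2 * (LF * (r₁ + ψ t)) := by
      rw [norm_smul]
      have hC : (0:ℝ) ≤ cF + LF * (‖Fc t‖ + (r₁ + ψ t)) := by positivity
      calc |1/(t₀+t)| * ‖I₂ t‖
          ≤ (1/(t₀+t)) * ((cF + LF * (‖Fc t‖ + (r₁ + ψ t))) * t) := by
            rw [abs_of_nonneg (by positivity)]
            gcongr
            exact hI₂bd t ht
        _ = (cF + LF * (‖Fc t‖ + (r₁ + ψ t))) * (t / (t₀+t)) := by ring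
        _ ≤ (cF + LF * (‖Fc t‖ + (r₁ + ψ t))) * 1 := by
            gcongr
            rw [div_le_one hpos]
            linarith
        _ = cF + LF * (‖Fc t‖ + (r₁ + ψ t)) := mul_one _
        _ ≤ cF + 2 * (LF * (r₁ + ψ t)) := by nlinarith
    have hsum : ‖G t‖ ≤ ‖gradient V (Fc t)‖ + ‖(t₀/(t₀+t)) • I₁ t‖ + ‖(1/(t₀+t)) • I₂ t‖ :=
      (norm_add_le _ _).trans (by gcongr; exact norm_add_le _ _)
    have hexp : c0 + K0 * (r₁ + ψ t) =
        cV + 2*cF + LF*r₂ + LV*(r₁ + ψ t) + 3*(LF*(r₁ + ψ t)) := by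
      rw [hc0, hK0]; ring
    linarith
  -- D integrability
  have hsub : ∀ s t : ℝ, 0 ≤ s → s ≤ t → t ≤ T → uIcc s t ⊆ uIcc (0:ℝ) T := by
    intro s t hs hst ht
    rw [uIcc_of_le hT.le]
    exact uIcc_subset_Icc ⟨hs, hst.trans ht⟩ ⟨hs.trans hst, ht⟩
  have hGII : IntervalIntegrable G volume 0 T := by
    apply ContinuousOn.intervalIntegrable
    rwa [uIcc_of_le hT.le]
  have hDI : IntervalIntegrable D volume 0 T := by
    have : IntervalIntegrable (fun t => f' t + G t) volume 0 T := hf'I.add hGII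
    rwa [show (fun t => f' t + G t) = D from (funext fun t => (hD t).symm)] at this
  have hψTmono : ∀ t ∈ Icc (0:ℝ) T, ψ t ≤ ψ T := fun t ht => hψmono t T ht.1 ht.2 le_rfl
  set BG := c0 + K0 * (r₁ + ψ T) with hBG
  have hGbd' : ∀ t ∈ Icc (0:ℝ) T, ‖G t‖ ≤ BG := by
    intro t ht
    refine (hGbd t ht).trans ?_
    have := hψTmono t ht
    rw [hBG]
    gcongr
  have hDasm : AEStronglyMeasurable D (volume.restrict (Ioc 0 T)) := by
    have h1 : AEStronglyMeasurable f' (volume.restrict (Ioc 0 T)) :=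
      ((intervalIntegrable_iff_integrableOn_Ioc_of_le hT.le).1 hf'I).aestronglyMeasurable
    have h2 : AEStronglyMeasurable G (volume.restrict (Ioc 0 T)) :=
      (hGcont.mono Ioc_subset_Icc_self).aestronglyMeasurable measurableSet_Ioc
    rw [show D = fun t => f' t + G t from funext hD]
    exact h1.add h2
  have hD2I : IntervalIntegrable (fun t => ‖D t‖^2) volume 0 T := by
    rw [intervalIntegrable_iff_integrableOn_Ioc_of_le hT.le]
    have hgint : IntegrableOn (fun t => 2*‖f' t‖^2 + 2*BG^2) (Ioc 0 T) volume := by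
      apply MeasureTheory.Integrable.add
      · exact ((intervalIntegrable_iff_integrableOn_Ioc_of_le hT.le).1 hf'2).const_mul 2
      · exact integrableOn_const measure_Ioc_lt_top.ne
    apply MeasureTheory.Integrable.mono' hgint
    · exact ((continuous_norm.pow 2).comp_aestronglyMeasurable hDasm)
    · filter_upwards [MeasureTheory.ae_restrict_mem measurableSet_Ioc] with t ht
      have hDt : ‖D t‖ ≤ ‖f' t‖ + BG := by
        rw [hD t]
        exact (norm_add_le _ _).trans (by gcongr; exact hGbd' t ⟨ht.1.le, ht.2⟩)
      have h0 : (0:ℝ) ≤ ‖D t‖ := norm_nonneg _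
      have h1 : (0:ℝ) ≤ ‖f' t‖ := norm_nonneg _
      rw [Real.norm_eq_abs, abs_of_nonneg (by positivity)]
      nlinarith [sq_nonneg (‖f' t‖ - BG)]
  -- AM-GM integral bound
  have hamgm : ∀ b : ℝ, 0 < b → ∀ y : ℝ, 0 ≤ y → y ≤ b*y^2 + 1/(4*b) := by
    intro b hb y hy
    rw [← sub_nonneg]
    have heq : b*y^2 + 1/(4*b) - y = (2*b*y - 1)^2 / (4*b) := by
      field_simp
      ring
    rw [heq]
    positivity
  have hDbound : ∀ b : ℝ, 0 < b → ∀ s t : ℝ, 0 ≤ s → s ≤ t → t ≤ T →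
      (∫ x in s..t, ‖D x‖) ≤ b * α + (t - s)/(4*b) := by
    intro b hb s t hs hst htT
    have hD2sub : IntervalIntegrable (fun x => ‖D x‖^2) volume s t :=
      hD2I.mono_set (hsub s t hs hst htT)
    have hDnsub : IntervalIntegrable (fun x => ‖D x‖) volume s t :=
      hDI.norm.mono_set (hsub s t hs hst htT)
    have hRHSII : IntervalIntegrable (fun x => b*‖D x‖^2 + 1/(4*b)) volume s t :=
      (hD2sub.const_mul b).add (intervalIntegrable_const)
    have step1 : (∫ x in s..t, ‖D x‖) ≤ ∫ x in s..t, (b*‖D x‖^2 + 1/(4*b)) := by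
      apply integral_mono_on hst hDnsub hRHSII
      intro x _
      exact hamgm b hb _ (norm_nonneg _)
    have step2 : (∫ x in s..t, (b*‖D x‖^2 + 1/(4*b)))
        = b * (∫ x in s..t, ‖D x‖^2) + (t-s) * (1/(4*b)) := by
      rw [integral_add (hD2sub.const_mul b) intervalIntegrable_const,
        intervalIntegral.integral_const_mul, intervalIntegral.integral_const, smul_eq_mul]
    have step3 : (∫ x in s..t, ‖D x‖^2) ≤ α := by
      refine le_trans ?_ hJ
      have := integral_mono_interval (μ := volume) (f := fun t => ‖D t‖^2)
        hs hst htT ?_ hD2I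
      · exact this
      · filter_upwards with x
        positivity
    calc (∫ x in s..t, ‖D x‖) ≤ b * (∫ x in s..t, ‖D x‖^2) + (t-s) * (1/(4*b)) := by
          rw [← step2]; exact step1
      _ ≤ b * α + (t-s)/(4*b) := by
          have h5 := mul_le_mul_of_nonneg_left step3 hb.le
          have h4 : (t-s)*(1/(4*b)) = (t-s)/(4*b) := by ring
          linarith
  -- pointwise bound on f'
  have hf'bd : ∀ s ∈ Icc (0:ℝ) T, ‖f' s‖ ≤ ‖D s‖ + c0 + K0 * (r₁ + ψ s) := by
    intro s hsIcc
    have : f' s = D s - G s := by rw [hD s]; abel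
    rw [this]
    have := norm_sub_le (D s) (G s)
    have := hGbd s hsIcc
    linarith
  -- the Gronwall-type inequality on ψ
  set x : ℝ → ℝ := fun t => ∫ s in (0:ℝ)..t, ψ s with hxdef
  have hψII : ∀ s t : ℝ, 0 ≤ s → s ≤ t → t ≤ T → IntervalIntegrable ψ volume s t := by
    intro s t hs hst ht
    apply ContinuousOn.intervalIntegrable
    apply hψcont.mono
    refine (hsub s t hs hst ht).trans ?_
    rw [uIcc_of_le hT.le]
  have hψle : ∀ t ∈ Icc (0:ℝ) T, ψ t ≤ ε₀ + K0 * x t := by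
    intro t ht
    have hDnsub : IntervalIntegrable (fun x => ‖D x‖) volume 0 t :=
      hDI.norm.mono_set (hsub 0 t le_rfl ht.1 ht.2)
    have hψsub : IntervalIntegrable ψ volume 0 t := hψII 0 t le_rfl ht.1 ht.2
    have hRHS : IntervalIntegrable (fun s => ‖D s‖ + ((c0 + K0*r₁) + K0 * ψ s)) volume 0 t :=
      hDnsub.add (intervalIntegrable_const.add (hψsub.const_mul K0))
    have step1 : ψ t ≤ ∫ s in (0:ℝ)..t, (‖D s‖ + ((c0 + K0*r₁) + K0 * ψ s)) := by
      apply integral_mono_on ht.1 (hsubII 0 t le_rfl ht.1 ht.2) hRHS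
      intro s hsIcc
      have hsT : s ∈ Icc (0:ℝ) T := ⟨hsIcc.1, hsIcc.2.trans ht.2⟩
      have := hf'bd s hsT
      have hexp : ‖D s‖ + c0 + K0 * (r₁ + ψ s) = ‖D s‖ + ((c0 + K0*r₁) + K0 * ψ s) := by ring
      linarith
    have step2 : (∫ s in (0:ℝ)..t, (‖D s‖ + ((c0 + K0*r₁) + K0 * ψ s)))
        = (∫ s in (0:ℝ)..t, ‖D s‖) + ((t - 0) * (c0 + K0*r₁) + K0 * x t) := by
      rw [integral_add hDnsub (intervalIntegrable_const.add (hψsub.const_mul K0)),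
        integral_add intervalIntegrable_const (hψsub.const_mul K0),
        intervalIntegral.integral_const, intervalIntegral.integral_const_mul, smul_eq_mul]
    have step3 : (∫ s in (0:ℝ)..t, ‖D s‖) ≤ α + T/4 := by
      have := hDbound 1 one_pos 0 t le_rfl ht.1 ht.2
      have h2 : (t - 0)/(4*1) ≤ T/4 := by
        rw [sub_zero]
        linarith [ht.2]
      linarith
    have step4 : (t - 0) * (c0 + K0*r₁) ≤ T * (c0 + K0*r₁) := by
      have h : (0:ℝ) ≤ c0 + K0*r₁ := by positivity
      have h2 : t - 0 ≤ T := by linarith [ht.2]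
      exact mul_le_mul_of_nonneg_right h2 h
    have hε₀eq : ε₀ = α + T/4 + T * (c0 + K0*r₁) := by
      rw [hε₀, eps0, hc0, hK0]
      ring
    rw [step2] at step1
    have h9 : (∫ (s : ℝ) in (0:ℝ)..t, ‖D s‖) + ((t - 0) * (c0 + K0 * r₁) + K0 * x t)
        ≤ (α + T/4) + (T * (c0 + K0 * r₁) + K0 * x t) :=
      add_le_add step3 (add_le_add step4 le_rfl)
    exact step1.trans (h9.trans (le_of_eq (by rw [hε₀eq]; ring)))
  have hxcont : ContinuousOn x (Icc 0 T) := by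
    have := intervalIntegral.continuousOn_primitive_interval
      (a := (0:ℝ)) (b := T) (μ := volume) (f := ψ)
      (by rw [uIcc_of_le hT.le]; exact hψcont.integrableOn_compact isCompact_Icc)
    rwa [uIcc_of_le hT.le] at this
  have hxnn : ∀ t ∈ Icc (0:ℝ) T, 0 ≤ x t := by
    intro t ht
    exact integral_nonneg ht.1 (fun s hsIcc => hψnn s ⟨hsIcc.1, hsIcc.2.trans ht.2⟩)
  have hxmono : ∀ s t : ℝ, 0 ≤ s → s ≤ t → t ≤ T → x s ≤ x t := by
    intro s t hs hst htT
    have hadd := integral_add_adjacent_intervals (a := (0:ℝ)) (b := s) (c := t)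
      (hψII 0 s le_rfl hs (by linarith)) (hψII s t hs hst htT)
    have hnn : 0 ≤ ∫ u in s..t, ψ u :=
      integral_nonneg hst (fun u hu => hψnn u ⟨hs.trans hu.1, hu.2.trans htT⟩)
    simp only [hxdef]
    linarith [hadd.le, hadd.symm.le]
  have hxderiv : ∀ r ∈ Ico (0:ℝ) T, HasDerivWithinAt x (ψ r) (Ici r) r := by
    intro r hr
    have hmem : Icc r T ∈ nhdsWithin r (Ioi r) := by
      apply nhdsWithin_mono r (Ioi_subset_Ici le_rfl)
      rw [← nhdsWithin_Icc_eq_nhdsGE hr.2]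
      exact self_mem_nhdsWithin
    apply intervalIntegral.integral_hasDerivWithinAt_right
      (hψII 0 r le_rfl hr.1 hr.2.le)
      ⟨Icc r T, hmem, (hψcont.mono (Icc_subset_Icc hr.1 le_rfl)).aestronglyMeasurable
        measurableSet_Icc⟩
    have h1 : ContinuousWithinAt ψ (Ioc r T) r :=
      ((hψcont.mono (Icc_subset_Icc hr.1 le_rfl)) r ⟨le_rfl, hr.2.le⟩).mono Ioc_subset_Icc_self
    rwa [ContinuousWithinAt, nhdsWithin_Ioc_eq_nhdsGT hr.2] at h1
  have hxle : ∀ t ∈ Icc (0:ℝ) T, x t ≤ gronwallBound 0 K0 ε₀ T := by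
    have hgron := norm_le_gronwallBound_of_norm_deriv_right_le (f := x) (f' := ψ)
      (δ := 0) (K := K0) (ε := ε₀) (a := 0) (b := T) hxcont hxderiv
      (by simp [hxdef, integral_same]) ?_
    · intro t ht
      have h1 := hgron T ⟨hT.le, le_rfl⟩
      have h2 : x T ≤ ‖x T‖ := le_abs_self _
      have h3 := hxmono t T ht.1 ht.2 le_rfl
      rw [sub_zero] at h1
      linarith
    · intro r hr
      have hrIcc : r ∈ Icc (0:ℝ) T := ⟨hr.1, hr.2.le⟩
      have h1 := hψle r hrIcc
      have h2 := hψnn r hrIcc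
      have h3 := hxnn r hrIcc
      rw [Real.norm_eq_abs, Real.norm_eq_abs, abs_of_nonneg h2, abs_of_nonneg h3]
      linarith
  have hΨeq : Ψ = ε₀ + K0 * gronwallBound 0 K0 ε₀ T := by
    rw [hΨ, PsiC, hε₀, hK0]
  have hψΨ : ∀ t ∈ Icc (0:ℝ) T, ψ t ≤ Ψ := by
    intro t ht
    have h1 := hψle t ht
    have h2 := hxle t ht
    rw [hΨeq]
    nlinarith
  constructor
  · intro t ht
    exact (hFψ t ht).trans (by have := hψΨ t ht; linarith)
  · intro s t hs hst htT
    rcases eq_or_lt_of_le hst with rfl | hlt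
    · simp
    · have hδpos : 0 < t - s := by linarith
      have hsqrtpos : 0 < Real.sqrt (t-s) := Real.sqrt_pos.2 hδpos
      have hsq : Real.sqrt (t-s) * Real.sqrt (t-s) = t - s := Real.mul_self_sqrt hδpos.le
      set b := Real.sqrt (t-s) / 2 with hb
      have hbpos : 0 < b := by rw [hb]; positivity
      -- Fc t - Fc s = ∫ₛᵗ f'
      have hdiff : Fc t - Fc s = ∫ u in s..t, f' u := by
        rw [hFTC t ⟨hs.trans hst, htT⟩, hFTC s ⟨hs, hst.trans htT⟩]
        have hadd := integral_add_adjacent_intervals (a := (0:ℝ)) (b := s) (c := t)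
          (hf'I.mono_set (hsub 0 s le_rfl hs (hst.trans htT)))
          (hf'I.mono_set (hsub s t hs hst htT))
        rw [← hadd]
        abel
      have h1 : ‖Fc t - Fc s‖ ≤ ∫ u in s..t, ‖f' u‖ := by
        rw [hdiff]
        exact norm_integral_le_integral_norm hst
      have hDnsub : IntervalIntegrable (fun u => ‖D u‖) volume s t :=
        hDI.norm.mono_set (hsub s t hs hst htT)
      have h2 : (∫ u in s..t, ‖f' u‖) ≤ ∫ u in s..t, (‖D u‖ + (c0 + K0 * (r₁ + Ψ))) := by
        apply integral_mono_on hst (hsubII s t hs hst htT)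
          (hDnsub.add intervalIntegrable_const)
        intro u hu
        have huT : u ∈ Icc (0:ℝ) T := ⟨hs.trans hu.1, hu.2.trans htT⟩
        have hb1 := hf'bd u huT
        have hψu := hψΨ u huT
        have hb2 : K0 * (r₁ + ψ u) ≤ K0 * (r₁ + Ψ) := by gcongr
        linarith
      have h3 : (∫ u in s..t, (‖D u‖ + (c0 + K0 * (r₁ + Ψ))))
          = (∫ u in s..t, ‖D u‖) + (t - s) * (c0 + K0 * (r₁ + Ψ)) := by
        rw [integral_add hDnsub intervalIntegrable_const,
          intervalIntegral.integral_const, smul_eq_mul]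
      have h4 : (∫ u in s..t, ‖D u‖) ≤ Real.sqrt (t-s) * (α + 1) := by
        have h5 := hDbound b hbpos s t hs hst htT
        have h7 : (t-s)/(4*b) = Real.sqrt (t-s)/2 := by
          rw [hb, show (4:ℝ)*(Real.sqrt (t-s)/2) = 2*Real.sqrt (t-s) by ring,
            div_eq_iff (by positivity : (2*Real.sqrt (t-s)) ≠ 0)]
          nlinarith [hsq]
        have h8 : Real.sqrt (t-s)/2*α + Real.sqrt (t-s)/2 ≤ Real.sqrt (t-s)*(α+1) := by
          have h9 : 0 ≤ Real.sqrt (t-s) * α := mul_nonneg hsqrtpos.le hα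
          linarith [hsqrtpos.le]
        calc (∫ u in s..t, ‖D u‖) ≤ b * α + (t-s)/(4*b) := h5
          _ = Real.sqrt (t-s)/2*α + Real.sqrt (t-s)/2 := by rw [h7, hb]
          _ ≤ Real.sqrt (t-s)*(α+1) := h8
      calc ‖Fc t - Fc s‖ ≤ ∫ u in s..t, (‖D u‖ + (c0 + K0 * (r₁ + Ψ))) := h1.trans h2
        _ = (∫ u in s..t, ‖D u‖) + (t - s) * (c0 + K0 * (r₁ + Ψ)) := h3
        _ ≤ Real.sqrt (t-s) * (α + 1) + (t - s) * (c0 + K0 * (r₁ + Ψ)) := by linarith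
        _ = Real.sqrt (t-s) * (α+1) + (c0 + K0*(r₁ + Ψ)) * (t-s) := by ring

/-- Lemma 2.6: the union over initial data `(t₀, μ₀, x₀)` with `t₀ ≥ τ`,
`μ₀` a probability measure carried by the compact set `C₂`, and `x₀ ∈ C₁` of the
`α`-sublevel sets of the rate functions is totally bounded in `C([0,T]; ℝ^d)`. -/
theorem stmt6 {d : ℕ} (hd : 1 ≤ d)
    (V F : Ed d → ℝ) (hV : ContDiff ℝ 2 V) (hF : ContDiff ℝ 2 F)
    (LV LF : ℝ) (hLV : 0 ≤ LV) (hLF : 0 ≤ LF)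
    (hVlip : ∀ x y : Ed d, ‖gradient V x - gradient V y‖ ≤ LV * ‖x - y‖)
    (hFlip : ∀ x y : Ed d, ‖gradient F x - gradient F y‖ ≤ LF * ‖x - y‖)
    (T τ α : ℝ) (hT : 0 < T) (hτ : 0 < τ) (hα : 0 ≤ α)
    (C₁ C₂ : Set (Ed d)) (hC₁ : IsCompact C₁) (hC₂ : IsCompact C₂) :
    TotallyBounded {f : C(↥(Icc (0:ℝ) T), Ed d) |
      ∃ t₀ : ℝ, τ ≤ t₀ ∧
      ∃ μ₀ : Measure (Ed d), IsProbabilityMeasure μ₀ ∧ μ₀ C₂ = 1 ∧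
        f ⟨0, left_mem_Icc.mpr hT.le⟩ ∈ C₁ ∧
        ∃ f' : ℝ → Ed d,
          HasL2Deriv T (fun t => f (projIcc 0 T hT.le t)) f' ∧
          (∫ t in (0:ℝ)..T,
            ‖drift V F t₀ μ₀ (fun s => f (projIcc 0 T hT.le s)) f' t‖ ^ 2) ≤ α} := by
  obtain ⟨r₁', hr₁'⟩ := hC₁.isBounded.subset_closedBall 0
  obtain ⟨r₂', hr₂'⟩ := hC₂.isBounded.subset_closedBall 0
  set r₁ := max r₁' 0 with hr₁def
  set r₂ := max r₂' 0 with hr₂def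
  have hr₁ : 0 ≤ r₁ := le_max_right _ _
  have hr₂ : 0 ≤ r₂ := le_max_right _ _
  have hC₁b : C₁ ⊆ Metric.closedBall 0 r₁ :=
    hr₁'.trans (Metric.closedBall_subset_closedBall (le_max_left _ _))
  have hC₂b : C₂ ⊆ Metric.closedBall 0 r₂ :=
    hr₂'.trans (Metric.closedBall_subset_closedBall (le_max_left _ _))
  set cV := ‖gradient V 0‖ with hcV
  set cF := ‖gradient F 0‖ with hcF
  set K0 := LV + 3*LF with hK0
  set c0 := cV + 2*cF + LF*r₂ with hc0
  set Ψ := PsiC cV cF LV LF r₁ r₂ T α with hΨ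
  set R := max (r₁ + Ψ) 0 with hR
  set C' := max (c0 + K0*(r₁ + Ψ)) 0 with hC'
  have hC'0 : 0 ≤ C' := le_max_right _ _
  set ω : ℝ → ℝ := fun δ => Real.sqrt δ * (α+1) + C' * δ with hω
  have hωt : Filter.Tendsto ω (nhds 0) (nhds 0) := by
    have hcont : Continuous ω := by
      rw [hω]
      exact (Real.continuous_sqrt.mul continuous_const).add (continuous_const.mul continuous_id)
    have := hcont.tendsto 0
    simpa [hω] using this
  apply TotallyBounded.subset ?_
    (totallyBounded_modulus (d := d) (X := ↥(Icc (0:ℝ) T)) R ω hωt)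
  rintro f ⟨t₀, ht₀, μ₀, hprob, hμC₂, hf0, f', ⟨hf'I, hf'2, hFTC⟩, hJ⟩
  set Fc : ℝ → Ed d := fun t => f (projIcc 0 T hT.le t) with hFc
  have hFcont : Continuous Fc := f.continuous.comp continuous_projIcc
  obtain ⟨Sf, hSf'⟩ := (isCompact_range f.continuous).isBounded.subset_closedBall 0
  have hSf : ∀ t : ℝ, ‖Fc t‖ ≤ Sf := by
    intro t
    have : Fc t ∈ Metric.closedBall 0 Sf := hSf' ⟨_, rfl⟩
    simpa [Metric.mem_closedBall, dist_zero_right] using this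
  have hval : ∀ x : ↥(Icc (0:ℝ) T), Fc ↑x = f x := by
    intro x
    simp only [hFc]
    congr 1
    rw [projIcc_of_mem hT.le x.2]
  have h0 : ‖Fc 0‖ ≤ r₁ := by
    have : Fc 0 = f ⟨0, left_mem_Icc.mpr hT.le⟩ := hval ⟨0, left_mem_Icc.mpr hT.le⟩
    rw [this]
    have := hC₁b hf0
    simpa [Metric.mem_closedBall, dist_zero_right] using this
  obtain ⟨hbnd, hmod⟩ := key_estimates V F hV hF LV LF hLV hLF hVlip hFlip T τ α hT hτ hα
    r₁ r₂ hr₁ hr₂ t₀ ht₀ μ₀ hprob C₂ hC₂.isClosed.measurableSet hC₂b hμC₂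
    Fc f' hFcont Sf hSf h0 hf'I hf'2 hFTC hJ
  constructor
  · intro x
    rw [← hval x]
    refine (hbnd ↑x x.2).trans ?_
    exact le_max_left _ _
  · intro x y
    have hdist : dist x y = |(x:ℝ) - (y:ℝ)| := rfl
    rcases le_total (y:ℝ) (x:ℝ) with hle | hle
    · have := hmod ↑y ↑x y.2.1 hle x.2.2
      calc ‖f x - f y‖ = ‖Fc ↑x - Fc ↑y‖ := by rw [hval x, hval y]
        _ ≤ Real.sqrt ((x:ℝ)-(y:ℝ)) * (α+1) + (c0 + K0*(r₁ + Ψ)) * ((x:ℝ)-(y:ℝ)) := this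
        _ ≤ ω (dist x y) := by
            simp only [hω]
            rw [hdist, abs_of_nonneg (by linarith : (0:ℝ) ≤ (x:ℝ)-(y:ℝ))]
            have h1 : (c0 + K0*(r₁ + Ψ)) * ((x:ℝ)-(y:ℝ)) ≤ C' * ((x:ℝ)-(y:ℝ)) := by
              apply mul_le_mul_of_nonneg_right (le_max_left _ _) (by linarith)
            linarith
    · have := hmod ↑x ↑y x.2.1 hle y.2.2
      calc ‖f x - f y‖ = ‖Fc ↑y - Fc ↑x‖ := by rw [hval x, hval y, norm_sub_rev]
        _ ≤ Real.sqrt ((y:ℝ)-(x:ℝ)) * (α+1) + (c0 + K0*(r₁ + Ψ)) * ((y:ℝ)-(x:ℝ)) := this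
        _ ≤ ω (dist x y) := by
            simp only [hω]
            rw [hdist, abs_of_nonpos (by linarith : (x:ℝ)-(y:ℝ) ≤ 0), neg_sub]
            have h1 : (c0 + K0*(r₁ + Ψ)) * ((y:ℝ)-(x:ℝ)) ≤ C' * ((y:ℝ)-(x:ℝ)) := by
              apply mul_le_mul_of_nonneg_right (le_max_left _ _) (by linarith)
            linarith
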